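/- In a Šerstnev PN space, the Šerstnev condition implies the homogeneity ν_{λp}(x) = ν_p(x/|λ|) for all p ∈ V, λ ≠ 0, and x ∈ ℝ, given ν_{−p} = ν_p and that ν_p = τ_M(ν_{αp}, ν_{(1−α)p}) for all α ∈ [0,1], where τ_M(F,G)(x) = sup_{s+t=x} min(F(s), G(t)). -/

import Mathlib

/-- in a Šerstnev PN space — ν_p = τ_M(ν_{αp}, ν_{(1−α)p}) for all
α ∈ [0,1], with τ_M(F,G)(x) = sup_{s+t=x} min(F(s),G(t)), and ν_{−p} = ν_p —
one has the homogeneity ν_{λp}(x) = ν_p(x/|λ|) for all p, λ ≠ 0 and x. -/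
theorem stmt18 {V : Type*} [AddCommGroup V] [Module ℝ V]
    (nu : V → ℝ → ℝ)
    (hmono : ∀ p, Monotone (nu p))
    (h01 : ∀ p x, nu p x ∈ Set.Icc (0:ℝ) 1)
    (hzero : ∀ p x, x ≤ 0 → nu p x = 0)
    (hlc : ∀ (p : V) (x : ℝ), 0 < x →
      Filter.Tendsto (nu p) (nhdsWithin x (Set.Iio x)) (nhds (nu p x)))
    (heps : ∀ x > (0:ℝ), nu 0 x = 1)
    (heq0 : ∀ p : V, (∀ x > (0:ℝ), nu p x = 1) → p = 0)
    (hneg : ∀ p : V, nu (-p) = nu p)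
    (hser : ∀ (p : V) (α : ℝ), α ∈ Set.Icc (0:ℝ) 1 → ∀ x : ℝ,
      nu p x = sSup {y | ∃ s t : ℝ, s + t = x ∧
        y = min (nu (α • p) s) (nu ((1 - α) • p) t)}) :
    ∀ (p : V) (l : ℝ), l ≠ 0 → ∀ x : ℝ, nu (l • p) x = nu p (x / |l|) := by
  -- L1 : smaller scalar gives larger nu
  have L1 : ∀ (q : V) (α : ℝ), α ∈ Set.Icc (0:ℝ) 1 → ∀ x, nu q x ≤ nu (α • q) x := by
    intro q α hα x
    rw [hser q α hα x]
    apply Real.sSup_le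
    · rintro y ⟨s, t, hst, rfl⟩
      rcases le_or_gt 0 t with ht | ht
      · exact le_trans (min_le_left _ _) (hmono _ (by linarith))
      · rw [hzero _ t ht.le]
        exact le_trans (min_le_right _ _) (h01 _ _).1
    · exact (h01 _ _).1
  -- halving identity
  have half : ∀ (q : V) (y : ℝ), nu ((1/2 : ℝ) • q) y = nu q (2 * y) := by
    intro q y
    have h := hser q (1/2) (by norm_num) (2 * y)
    have h12 : (1:ℝ) - 1/2 = 1/2 := by norm_num
    rw [h12] at h
    rw [h]
    apply le_antisymm
    · apply le_csSup
      · refine ⟨1, ?_⟩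
        rintro z ⟨s, t, hst, rfl⟩
        exact le_trans (min_le_left _ _) (h01 _ _).2
      · exact ⟨y, y, by ring, by rw [min_self]⟩
    · apply Real.sSup_le
      · rintro z ⟨s, t, hst, rfl⟩
        rcases le_total s t with hc | hc
        · exact le_trans (min_le_left _ _) (hmono _ (by linarith))
        · exact le_trans (min_le_right _ _) (hmono _ (by linarith))
      · exact (h01 _ _).1
  -- powers of 1/2
  have dy1 : ∀ (n : ℕ) (q : V) (y : ℝ),
      nu (((1/2:ℝ)^n) • q) y = nu q (y / (1/2)^n) := by
    intro n
    induction n with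
    | zero => intro q y; simp
    | succ n ih =>
      intro q y
      have e : ((1/2:ℝ)^(n+1)) • q = (1/2:ℝ) • (((1/2:ℝ)^n) • q) := by
        rw [smul_smul]; ring_nf
      rw [e, half, ih]
      congr 1
      rw [pow_succ]
      field_simp
  -- combining : homogeneity is additive in the scalar
  have addc : ∀ (q : V) (a b : ℝ), 0 < a → 0 < b →
      (∀ y, nu (a • q) y = nu q (y/a)) → (∀ y, nu (b • q) y = nu q (y/b)) →
      ∀ y, nu ((a+b) • q) y = nu q (y/(a+b)) := by
    intro q a b ha hb Ha Hb y
    have hab : 0 < a + b := by linarith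
    have hα : a/(a+b) ∈ Set.Icc (0:ℝ) 1 :=
      ⟨by positivity, by rw [div_le_one hab]; linarith⟩
    have h := hser ((a+b) • q) (a/(a+b)) hα y
    have e1 : (a/(a+b)) • ((a+b) • q) = a • q := by
      rw [smul_smul]; congr 1; field_simp
    have e2 : (1 - a/(a+b)) • ((a+b) • q) = b • q := by
      rw [smul_smul]; congr 1; field_simp; ring
    rw [e1, e2] at h
    rw [h]
    apply le_antisymm
    · apply Real.sSup_le
      · rintro z ⟨s, t, hst, rfl⟩
        rw [Ha, Hb]
        rcases le_total (s/a) (t/b) with hc | hc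
        · refine le_trans (min_le_left _ _) (hmono q ?_)
          rw [div_le_div_iff₀ ha hab]
          rw [div_le_div_iff₀ ha hb] at hc
          nlinarith
        · refine le_trans (min_le_right _ _) (hmono q ?_)
          rw [div_le_div_iff₀ hb hab]
          rw [div_le_div_iff₀ hb ha] at hc
          nlinarith
      · exact (h01 _ _).1
    · apply le_csSup
      · refine ⟨1, ?_⟩
        rintro z ⟨s, t, hst, rfl⟩
        exact le_trans (min_le_left _ _) (h01 _ _).2
      · refine ⟨a*y/(a+b), b*y/(a+b), by field_simp, ?_⟩
        rw [Ha, Hb]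
        have ea : a*y/(a+b)/a = y/(a+b) := by field_simp
        have eb : b*y/(a+b)/b = y/(a+b) := by field_simp
        rw [ea, eb, min_self]
  -- all positive dyadics
  have dyk : ∀ (n k : ℕ), 0 < k → ∀ (q : V) (y : ℝ),
      nu (((k:ℝ) * (1/2)^n) • q) y = nu q (y / ((k:ℝ) * (1/2)^n)) := by
    intro n k
    induction k with
    | zero => intro h; omega
    | succ k ih =>
      intro _ q y
      rcases Nat.eq_zero_or_pos k with hk0 | hk0
      · subst hk0; simpa using dy1 n q y
      · have e : ((k+1 : ℕ) : ℝ) * (1/2:ℝ)^n = (k:ℝ)*(1/2)^n + 1*(1/2)^n := by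
          push_cast; ring
        rw [e]
        exact addc q _ _ (by positivity) (by positivity)
          (ih hk0 q) (by intro z; rw [one_mul]; exact dy1 n q z) y
  -- density of dyadics
  have dens : ∀ u v : ℝ, 0 < u → u < v →
      ∃ (n k : ℕ), 0 < k ∧ u ≤ (k:ℝ)*(1/2)^n ∧ (k:ℝ)*(1/2)^n < v := by
    intro u v hu huv
    obtain ⟨n, hn⟩ := exists_pow_lt_of_lt_one (show (0:ℝ) < v - u by linarith)
      (show (1/2:ℝ) < 1 by norm_num)
    have hd : (0:ℝ) < (1/2)^n := by positivity
    refine ⟨n, ⌈u/(1/2:ℝ)^n⌉₊, Nat.ceil_pos.mpr (div_pos hu hd), ?_, ?_⟩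
    · rw [← div_le_iff₀ hd]; exact Nat.le_ceil _
    · have h1 : (⌈u/(1/2:ℝ)^n⌉₊ : ℝ) < u/(1/2)^n + 1 :=
        Nat.ceil_lt_add_one (by positivity)
      have h2 : (⌈u/(1/2:ℝ)^n⌉₊ : ℝ) * (1/2)^n < (u/(1/2)^n + 1) * (1/2)^n :=
        mul_lt_mul_of_pos_right h1 hd
      have h3 : (u/(1/2:ℝ)^n + 1) * (1/2)^n = u + (1/2)^n := by field_simp
      linarith
  -- the key lower bound, via left-continuity
  have Hstar : ∀ (q : V) (l : ℝ), 0 < l → ∀ x, nu q (x/l) ≤ nu (l • q) x := by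
    intro q l hl x
    rcases le_or_gt x 0 with hx | hx
    · have hxl : x / l ≤ 0 := by rw [div_nonpos_iff]; exact Or.inr ⟨hx, hl.le⟩
      rw [hzero q _ hxl]
      exact (h01 _ _).1
    · apply le_of_forall_pos_le_add
      intro ε hε
      have hxl : 0 < x / l := div_pos hx hl
      have hev1 : ∀ᶠ y in nhdsWithin (x/l) (Set.Iio (x/l)),
          nu q (x/l) - ε < nu q y :=
        (hlc q (x/l) hxl).eventually (eventually_gt_nhds (by linarith))
      have hev2 : ∀ᶠ y in nhdsWithin (x/l) (Set.Iio (x/l)), y ∈ Set.Iio (x/l) :=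
        eventually_mem_nhdsWithin
      have hev3 : ∀ᶠ y in nhdsWithin (x/l) (Set.Iio (x/l)), 0 < y :=
        (eventually_gt_nhds hxl).filter_mono nhdsWithin_le_nhds
      obtain ⟨y, hy1, hy2, hy3⟩ := (hev1.and (hev2.and hev3)).exists
      have hy2' : y < x / l := hy2
      have hly : l < x / y := by
        rw [lt_div_iff₀ hy3]
        rw [lt_div_iff₀ hl] at hy2'
        linarith
      obtain ⟨n, k, hk, hd1, hd2⟩ := dens l (x/y) hl hly
      set d : ℝ := (k:ℝ) * (1/2)^n with hdd
      have hd0 : 0 < d := by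
        have : (0:ℝ) < (k:ℝ) := by exact_mod_cast hk
        positivity
      have h1 : nu q y ≤ nu q (x/d) := by
        apply hmono q
        rw [le_div_iff₀ hd0]
        rw [lt_div_iff₀ hy3] at hd2
        nlinarith
      have h2 : nu q (x/d) = nu (d • q) x := (dyk n k hk q x).symm
      have h3 : nu (d • q) x ≤ nu (l • q) x := by
        have hmem : l/d ∈ Set.Icc (0:ℝ) 1 :=
          ⟨by positivity, by rw [div_le_one hd0]; exact hd1⟩
        have hthis := L1 (d • q) (l/d) hmem x
        rwa [smul_smul, div_mul_cancel₀ _ (ne_of_gt hd0)] at hthis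
      linarith
  -- full homogeneity for positive scalars
  have Hpos : ∀ (q : V) (l : ℝ), 0 < l → ∀ x, nu (l • q) x = nu q (x/l) := by
    intro q l hl x
    apply le_antisymm
    · obtain ⟨n, hn⟩ := exists_pow_lt_of_lt_one hl (show (1/2:ℝ) < 1 by norm_num)
      set d : ℝ := (1/2)^n with hdd
      have hd0 : 0 < d := by positivity
      have hstar := Hstar (l • q) (d/l) (div_pos hd0 hl) (x*d/l)
      have e1 : (x*d/l)/(d/l) = x := by
        field_simp
      have e2 : (d/l) • (l • q) = d • q := by
        rw [smul_smul, div_mul_cancel₀ _ (ne_of_gt hl)]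
      rw [e1, e2] at hstar
      have e3 : nu (d • q) (x*d/l) = nu q (x/l) := by
        have := dyk n 1 one_pos q (x*d/l)
        rw [Nat.cast_one, one_mul] at this
        rw [← hdd] at this
        rw [this]
        congr 1
        field_simp
      rw [e3] at hstar
      exact hstar
    · exact Hstar q l hl x
  -- conclusion
  intro p l hl x
  rcases hl.lt_or_gt with hneg' | hpos
  · have e : l • p = -((-l) • p) := by rw [neg_smul, neg_neg]
    rw [e, hneg, Hpos p (-l) (by linarith) x, abs_of_neg hneg']
  · rw [Hpos p l hpos x, abs_of_pos hpos]
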